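/- (Correctness of Π without left recursion) Given a PEG G, a parsing expression p, and a subject xy: if G[p] xy ⇝ (y, x') in the original PEG semantics, then the parsing machine executing the compiled program Π(G, i, p) from state ⟨pc, xy, e⟩, where pc is the address of the first instruction of Π(G, i, p), reaches state ⟨pc + |Π(G, i, p)|, y, e⟩; and if G[p] xy ⇝ fail, then the machine executing Π(G, i, p) from ⟨pc, xy, e⟩ reaches the failure state Fail⟨e⟩. -/

import Mathlib

/-- Parsing expressions over non-terminals `N` and terminals `T`. -/
inductive PExp (N T : Type) : Type where
  | empty : PExp N T
  | term : T → PExp N T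
  | var : N → PExp N T
  | seq : PExp N T → PExp N T → PExp N T
  | choice : PExp N T → PExp N T → PExp N T
  | star : PExp N T → PExp N T
  | nott : PExp N T → PExp N T

/-- A PEG: a rule for every non-terminal and a starting expression.
(A PEG whose `prod` is a total function is a closed PEG.) -/
structure PEG (N T : Type) where
  prod : N → PExp N T
  start : PExp N T

/-- Symbols of parse strings: terminals and tagged brackets `A[...]`. -/
inductive PSym (N T : Type) : Type where
  | t : T → PSym N T
  | node : N → List (PSym N T) → PSym N T

/-- Parse strings. -/
abbrev PStr (N T : Type) := List (PSym N T)

/-- Result of a match: `fail`, or a pair (remaining suffix, parse string). -/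
inductive Res (N T : Type) : Type where
  | fail : Res N T
  | ok : List T → PStr N T → Res N T
/-- The original PEG semantics `G[p] s ⇝ r`. -/
inductive Match {N T : Type} (G : PEG N T) : PExp N T → List T → Res N T → Prop where
  | empty1 : Match G .empty s (.ok s [])
  | char1 : Match G (.term a) (a :: s) (.ok s [.t a])
  | char2 : b ≠ a → Match G (.term b) (a :: s) .fail
  | char3 : Match G (.term a) [] .fail
  | var1 : Match G (G.prod A) s (.ok s1 t) → Match G (.var A) s (.ok s1 [.node A t])
  | var2 : Match G (G.prod A) s .fail → Match G (.var A) s .fail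
  | con1 : Match G p1 s (.ok s1 t1) → Match G p2 s1 (.ok s2 t2) →
      Match G (.seq p1 p2) s (.ok s2 (t1 ++ t2))
  | con2 : Match G p1 s (.ok s1 t1) → Match G p2 s1 .fail → Match G (.seq p1 p2) s .fail
  | con3 : Match G p1 s .fail → Match G (.seq p1 p2) s .fail
  | ord1 : Match G p1 s (.ok s1 t1) → Match G (.choice p1 p2) s (.ok s1 t1)
  | ord2 : Match G p1 s .fail → Match G p2 s .fail → Match G (.choice p1 p2) s .fail
  | ord3 : Match G p1 s .fail → Match G p2 s (.ok s1 t1) → Match G (.choice p1 p2) s (.ok s1 t1)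
  | not1 : Match G p s .fail → Match G (.nott p) s (.ok s [])
  | not2 : Match G p s (.ok s1 t1) → Match G (.nott p) s .fail
  | rep1 : Match G p s .fail → Match G (.star p) s (.ok s [])
  | rep2 : Match G p s (.ok s1 t1) → Match G (.star p) s1 (.ok s2 t2) →
      Match G (.star p) s (.ok s2 (t1 ++ t2))
/-- Instructions of the parsing machine; jump arguments are relative offsets. -/
inductive Instr (T : Type) : Type where
  | char : T → Instr T
  | any : Instr T
  | choice : ℤ → Instr T
  | jump : ℤ → Instr T
  | call : ℤ → Instr T
  | ret : Instr T
  | commit : ℤ → Instr T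
  | fail : Instr T

/-- Stack entries: call frames and backtrack frames. -/
inductive Frame (T : Type) : Type where
  | ret : ℕ → Frame T
  | back : ℕ → List T → Frame T

/-- Machine states: `⟨pc, s, e⟩` or `Fail⟨e⟩`. -/
inductive MState (T : Type) : Type where
  | st : ℕ → List T → List (Frame T) → MState T
  | fail : List (Frame T) → MState T

/-- The address `pc + l` for a relative offset `l`. -/
def nxt (pc : ℕ) (l : ℤ) : ℕ := ((pc : ℤ) + l).toNat

/-- One step of the parsing machine over the (implicit) program `prog`. -/
inductive Step {T : Type} (prog : List (Instr T)) : MState T → MState T → Prop where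
  | char_ok : prog[pc]? = some (.char a) →
      Step prog (.st pc (a :: s) e) (.st (pc + 1) s e)
  | char_fail : prog[pc]? = some (.char a) → b ≠ a →
      Step prog (.st pc (b :: s) e) (.fail e)
  | char_eps : prog[pc]? = some (.char a) →
      Step prog (.st pc [] e) (.fail e)
  | any_ok : prog[pc]? = some .any →
      Step prog (.st pc (a :: s) e) (.st (pc + 1) s e)
  | any_eps : prog[pc]? = some .any →
      Step prog (.st pc [] e) (.fail e)
  | choice : prog[pc]? = some (.choice i) →
      Step prog (.st pc s e) (.st (pc + 1) s (.back (nxt pc i) s :: e))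
  | jump : prog[pc]? = some (.jump l) →
      Step prog (.st pc s e) (.st (nxt pc l) s e)
  | call : prog[pc]? = some (.call l) →
      Step prog (.st pc s e) (.st (nxt pc l) s (.ret (pc + 1) :: e))
  | ret : prog[pc]? = some .ret →
      Step prog (.st pc s (.ret pc2 :: e)) (.st pc2 s e)
  | commit : prog[pc]? = some (.commit l) →
      Step prog (.st pc s (h :: e)) (.st (nxt pc l) s e)
  | fail_i : prog[pc]? = some .fail →
      Step prog (.st pc s e) (.fail e)
  | unwind_ret : Step prog (.fail (.ret pc :: e)) (.fail e)
  | unwind_back : Step prog (.fail (.back pc s :: e)) (.st pc s e)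

/-- Zero or more machine steps. -/
abbrev Steps {T : Type} (prog : List (Instr T)) : MState T → MState T → Prop :=
  Relation.ReflTransGen (Step prog)

/-- `Π(G, i, p)`: compilation of the parsing expression `p` starting at
position `i`, where `addr A` is the starting address of the compiled
production of the non-terminal `A`. -/
def compile {N T : Type} (addr : N → ℕ) : PExp N T → ℕ → List (Instr T)
  | .empty, _ => []
  | .term a, _ => [.char a]
  | .var A, i => [.call ((addr A : ℤ) - (i : ℤ))]
  | .seq p1 p2, i =>
      let c1 := compile addr p1 i
      c1 ++ compile addr p2 (i + c1.length)
  | .choice p1 p2, i =>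
      let c1 := compile addr p1 (i + 1)
      let c2 := compile addr p2 (i + c1.length + 2)
      .choice ((c1.length : ℤ) + 2) :: (c1 ++ (.commit ((c2.length : ℤ) + 1) :: c2))
  | .star p, i =>
      let c := compile addr p (i + 1)
      .choice ((c.length : ℤ) + 2) :: (c ++ [.commit (-((c.length : ℤ) + 1))])
  | .nott p, i =>
      let c := compile addr p (i + 1)
      .choice ((c.length : ℤ) + 3) :: (c ++ [.commit 1, .fail])

/-- `code` is the segment of `prog` starting at address `i`. -/
def SegAt {T : Type} (prog : List (Instr T)) (i : ℕ) (code : List (Instr T)) : Prop :=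
  ∃ pre post, prog = pre ++ code ++ post ∧ pre.length = i

section Aux
variable {N T : Type}

lemma SegAt.lookup {prog code : List (Instr T)} {i j : ℕ} {ins : Instr T}
    (h : SegAt prog i code) (hj : code[j]? = some ins) : prog[i + j]? = some ins := by
  obtain ⟨pre, post, rfl, rfl⟩ := h
  have hjlt : j < code.length := by
    by_contra hc
    rw [List.getElem?_eq_none (by omega)] at hj
    exact nomatch hj
  rw [List.append_assoc, List.getElem?_append_right (by omega)]
  have : pre.length + j - pre.length = j := by omega
  rw [this, List.getElem?_append, if_pos hjlt, hj]

lemma SegAt.split {prog c1 c2 : List (Instr T)} {i : ℕ}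
    (h : SegAt prog i (c1 ++ c2)) :
    SegAt prog i c1 ∧ SegAt prog (i + c1.length) c2 := by
  obtain ⟨pre, post, hpr, rfl⟩ := h
  constructor
  · exact ⟨pre, c2 ++ post, by simp [hpr], rfl⟩
  · exact ⟨pre ++ c1, post, by simp [hpr], by simp⟩

lemma SegAt.cons {prog : List (Instr T)} {c : List (Instr T)} {x : Instr T} {i : ℕ}
    (h : SegAt prog i (x :: c)) :
    prog[i]? = some x ∧ SegAt prog (i + 1) c := by
  have := SegAt.split (c1 := [x]) (c2 := c) (by simpa using h)
  refine ⟨?_, by simpa using this.2⟩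
  have := this.1.lookup (j := 0) (ins := x) rfl
  simpa using this

lemma correct_aux (G : PEG N T) (addr : N → ℕ) (prog : List (Instr T))
    (hgram : ∀ A : N, SegAt prog (addr A)
      (compile addr (G.prod A) (addr A) ++ [Instr.ret])) :
    ∀ {p : PExp N T} {s : List T} {r : Res N T}, Match G p s r →
      ∀ (i : ℕ) (e : List (Frame T)), SegAt prog i (compile addr p i) →
      (∀ s1 t, r = .ok s1 t →
        Steps prog (.st i s e) (.st (i + (compile addr p i).length) s1 e)) ∧
      (r = .fail → Steps prog (.st i s e) (.fail e)) := by
  intro p s r hm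
  induction hm with
  | empty1 =>
    intro i e _
    refine ⟨fun s1 t ht => ?_, fun h => nomatch h⟩
    cases ht
    simpa [compile] using Relation.ReflTransGen.refl
  | @char1 a s =>
    intro i e hseg
    refine ⟨fun s1 t ht => ?_, fun h => nomatch h⟩
    cases ht
    have hl := hseg.lookup (j := 0) (ins := .char a) rfl
    simp only [Nat.add_zero] at hl
    simpa [compile] using Relation.ReflTransGen.single (Step.char_ok hl)
  | @char2 b a s hne =>
    intro i e hseg
    refine ⟨fun s1 t ht => (nomatch ht), fun _ => ?_⟩
    have hl := hseg.lookup (j := 0) (ins := .char b) (by simp [compile])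
    simp only [Nat.add_zero] at hl
    exact Relation.ReflTransGen.single (Step.char_fail hl hne.symm)
  | @char3 a =>
    intro i e hseg
    refine ⟨fun s1 t ht => (nomatch ht), fun _ => ?_⟩
    have hl := hseg.lookup (j := 0) (ins := .char a) (by simp [compile])
    simp only [Nat.add_zero] at hl
    exact Relation.ReflTransGen.single (Step.char_eps hl)
  | @var1 A s s1 t _ ih =>
    intro i e hseg
    refine ⟨fun s1' t' ht => ?_, fun h => nomatch h⟩
    cases ht
    have hl := hseg.lookup (j := 0) (ins := .call ((addr A : ℤ) - (i : ℤ))) rfl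
    simp only [Nat.add_zero] at hl
    have hsplit := SegAt.split (hgram A)
    have hret := hsplit.2.lookup (j := 0) (ins := .ret) rfl
    simp only [Nat.add_zero] at hret
    have hn : nxt i ((addr A : ℤ) - (i : ℤ)) = addr A := by simp only [nxt]; omega
    have ihh := (ih (addr A) (.ret (i+1) :: e) hsplit.1).1 s1 t rfl
    refine Relation.ReflTransGen.head (Step.call hl) ?_
    rw [hn]
    refine Relation.ReflTransGen.trans ihh ?_
    refine Relation.ReflTransGen.single ?_
    have : i + (compile addr (PExp.var A : PExp N T) i).length = i + 1 := by simp [compile]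
    rw [this]
    exact Step.ret hret
  | @var2 A s _ ih =>
    intro i e hseg
    refine ⟨fun s1 t ht => (nomatch ht), fun _ => ?_⟩
    have hl := hseg.lookup (j := 0) (ins := .call ((addr A : ℤ) - (i : ℤ))) rfl
    simp only [Nat.add_zero] at hl
    have hsplit := SegAt.split (hgram A)
    have hn : nxt i ((addr A : ℤ) - (i : ℤ)) = addr A := by simp only [nxt]; omega
    have ihh := (ih (addr A) (.ret (i+1) :: e) hsplit.1).2 rfl
    refine Relation.ReflTransGen.head (Step.call hl) ?_
    rw [hn]
    exact Relation.ReflTransGen.trans ihh (Relation.ReflTransGen.single Step.unwind_ret)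
  | @con1 p1 s s1 t1 p2 s2 t2 _ _ ih1 ih2 =>
    intro i e hseg
    refine ⟨fun s1' t' ht => ?_, fun h => nomatch h⟩
    cases ht
    rw [show compile addr (PExp.seq p1 p2) i
        = compile addr p1 i ++ compile addr p2 (i + (compile addr p1 i).length) from rfl] at hseg ⊢
    have hsp := SegAt.split hseg
    have h1 := (ih1 i e hsp.1).1 s1 t1 rfl
    have h2 := (ih2 (i + (compile addr p1 i).length) e hsp.2).1 s2 t2 rfl
    rw [List.length_append, ← Nat.add_assoc]
    exact Relation.ReflTransGen.trans h1 h2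
  | @con2 p1 s s1 t1 p2 _ _ ih1 ih2 =>
    intro i e hseg
    refine ⟨fun s1' t' ht => (nomatch ht), fun _ => ?_⟩
    rw [show compile addr (PExp.seq p1 p2) i
        = compile addr p1 i ++ compile addr p2 (i + (compile addr p1 i).length) from rfl] at hseg
    have hsp := SegAt.split hseg
    have h1 := (ih1 i e hsp.1).1 s1 t1 rfl
    have h2 := (ih2 (i + (compile addr p1 i).length) e hsp.2).2 rfl
    exact Relation.ReflTransGen.trans h1 h2
  | @con3 p1 s p2 _ ih1 =>
    intro i e hseg
    refine ⟨fun s1' t' ht => (nomatch ht), fun _ => ?_⟩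
    rw [show compile addr (PExp.seq p1 p2) i
        = compile addr p1 i ++ compile addr p2 (i + (compile addr p1 i).length) from rfl] at hseg
    exact (ih1 i e (SegAt.split hseg).1).2 rfl
  | @ord1 p1 s s1 t1 p2 _ ih1 =>
    intro i e hseg
    refine ⟨fun s1' t' ht => ?_, fun h => nomatch h⟩
    cases ht
    set c1 := compile addr p1 (i + 1) with hc1
    set c2 := compile addr p2 (i + c1.length + 2) with hc2
    have hcomp : compile addr (PExp.choice p1 p2) i
        = .choice ((c1.length : ℤ) + 2) :: (c1 ++ (.commit ((c2.length : ℤ) + 1) :: c2)) := rfl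
    rw [hcomp] at hseg ⊢
    obtain ⟨hch, hrest⟩ := hseg.cons
    have hsp := SegAt.split hrest
    obtain ⟨hcm, _⟩ := hsp.2.cons
    have h1 := (ih1 (i + 1) (.back (nxt i ((c1.length : ℤ) + 2)) s :: e) hsp.1).1 s1 t1 rfl
    refine Relation.ReflTransGen.head (Step.choice hch) ?_
    refine Relation.ReflTransGen.trans h1 ?_
    refine Relation.ReflTransGen.single ?_
    have hn : nxt (i + 1 + c1.length) ((c2.length : ℤ) + 1)
        = i + (Instr.choice ((c1.length : ℤ) + 2) :: (c1 ++ (.commit ((c2.length : ℤ) + 1) :: c2))).length := by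
      simp only [nxt, List.length_cons, List.length_append, List.length_nil, List.length_singleton]; omega
    rw [← hn]
    exact Step.commit hcm
  | @ord2 p1 s p2 _ _ ih1 ih2 =>
    intro i e hseg
    refine ⟨fun s1' t' ht => (nomatch ht), fun _ => ?_⟩
    set c1 := compile addr p1 (i + 1) with hc1
    set c2 := compile addr p2 (i + c1.length + 2) with hc2
    have hcomp : compile addr (PExp.choice p1 p2) i
        = .choice ((c1.length : ℤ) + 2) :: (c1 ++ (.commit ((c2.length : ℤ) + 1) :: c2)) := rfl
    rw [hcomp] at hseg
    obtain ⟨hch, hrest⟩ := hseg.cons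
    have hsp := SegAt.split hrest
    obtain ⟨_, hc2seg⟩ := hsp.2.cons
    have h1 := (ih1 (i + 1) (.back (nxt i ((c1.length : ℤ) + 2)) s :: e) hsp.1).2 rfl
    have hn : nxt i ((c1.length : ℤ) + 2) = i + c1.length + 2 := by simp only [nxt]; omega
    have hc2pos : i + 1 + c1.length + 1 = i + c1.length + 2 := by omega
    rw [hc2pos] at hc2seg
    have h2 := (ih2 (i + c1.length + 2) e hc2seg).2 rfl
    refine Relation.ReflTransGen.head (Step.choice hch) ?_
    refine Relation.ReflTransGen.trans h1 ?_
    rw [hn]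
    exact Relation.ReflTransGen.head Step.unwind_back h2
  | @ord3 p1 s p2 s1 t1 _ _ ih1 ih2 =>
    intro i e hseg
    refine ⟨fun s1' t' ht => ?_, fun h => nomatch h⟩
    cases ht
    set c1 := compile addr p1 (i + 1) with hc1
    set c2 := compile addr p2 (i + c1.length + 2) with hc2
    have hcomp : compile addr (PExp.choice p1 p2) i
        = .choice ((c1.length : ℤ) + 2) :: (c1 ++ (.commit ((c2.length : ℤ) + 1) :: c2)) := rfl
    rw [hcomp] at hseg ⊢
    obtain ⟨hch, hrest⟩ := hseg.cons
    have hsp := SegAt.split hrest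
    obtain ⟨_, hc2seg⟩ := hsp.2.cons
    have h1 := (ih1 (i + 1) (.back (nxt i ((c1.length : ℤ) + 2)) s :: e) hsp.1).2 rfl
    have hn : nxt i ((c1.length : ℤ) + 2) = i + c1.length + 2 := by simp only [nxt]; omega
    have hc2pos : i + 1 + c1.length + 1 = i + c1.length + 2 := by omega
    rw [hc2pos] at hc2seg
    have h2 := (ih2 (i + c1.length + 2) e hc2seg).1 s1 t1 rfl
    refine Relation.ReflTransGen.head (Step.choice hch) ?_
    refine Relation.ReflTransGen.trans h1 ?_
    rw [hn]
    refine Relation.ReflTransGen.head Step.unwind_back ?_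
    have hlen : i + c1.length + 2 + c2.length
        = i + (Instr.choice ((c1.length : ℤ) + 2) :: (c1 ++ (.commit ((c2.length : ℤ) + 1) :: c2))).length := by
      simp; omega
    rw [← hlen]
    exact h2
  | @not1 p s _ ih =>
    intro i e hseg
    refine ⟨fun s1' t' ht => ?_, fun h => nomatch h⟩
    cases ht
    set c := compile addr p (i + 1) with hc
    have hcomp : compile addr (PExp.nott p) i
        = .choice ((c.length : ℤ) + 3) :: (c ++ [.commit 1, .fail]) := rfl
    rw [hcomp] at hseg ⊢
    obtain ⟨hch, hrest⟩ := hseg.cons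
    have hsp := SegAt.split hrest
    have h1 := (ih (i + 1) (.back (nxt i ((c.length : ℤ) + 3)) s :: e) hsp.1).2 rfl
    have hn : nxt i ((c.length : ℤ) + 3)
        = i + (Instr.choice ((c.length : ℤ) + 3) :: (c ++ [Instr.commit 1, Instr.fail])).length := by
      simp only [nxt, List.length_cons, List.length_append, List.length_nil, List.length_singleton]; omega
    refine Relation.ReflTransGen.head (Step.choice hch) ?_
    refine Relation.ReflTransGen.trans h1 ?_
    rw [hn]
    exact Relation.ReflTransGen.single Step.unwind_back
  | @not2 p s s1 t1 _ ih =>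
    intro i e hseg
    refine ⟨fun s1' t' ht => (nomatch ht), fun _ => ?_⟩
    set c := compile addr p (i + 1) with hc
    have hcomp : compile addr (PExp.nott p) i
        = .choice ((c.length : ℤ) + 3) :: (c ++ [.commit 1, .fail]) := rfl
    rw [hcomp] at hseg
    obtain ⟨hch, hrest⟩ := hseg.cons
    have hsp := SegAt.split hrest
    have hcm := hsp.2.lookup (j := 0) (ins := .commit 1) rfl
    have hfl := hsp.2.lookup (j := 1) (ins := .fail) rfl
    simp only [Nat.add_zero] at hcm
    have h1 := (ih (i + 1) (.back (nxt i ((c.length : ℤ) + 3)) s :: e) hsp.1).1 s1 t1 rfl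
    refine Relation.ReflTransGen.head (Step.choice hch) ?_
    refine Relation.ReflTransGen.trans h1 ?_
    refine Relation.ReflTransGen.head (Step.commit hcm) ?_
    have hn : nxt (i + 1 + c.length) 1 = i + 1 + c.length + 1 := by simp only [nxt]; omega
    rw [hn]
    exact Relation.ReflTransGen.single (Step.fail_i hfl)
  | @rep1 p s _ ih =>
    intro i e hseg
    refine ⟨fun s1' t' ht => ?_, fun h => nomatch h⟩
    cases ht
    set c := compile addr p (i + 1) with hc
    have hcomp : compile addr (PExp.star p) i
        = .choice ((c.length : ℤ) + 2) :: (c ++ [.commit (-((c.length : ℤ) + 1))]) := rfl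
    rw [hcomp] at hseg ⊢
    obtain ⟨hch, hrest⟩ := hseg.cons
    have hsp := SegAt.split hrest
    have h1 := (ih (i + 1) (.back (nxt i ((c.length : ℤ) + 2)) s :: e) hsp.1).2 rfl
    have hn : nxt i ((c.length : ℤ) + 2)
        = i + (Instr.choice ((c.length : ℤ) + 2) :: (c ++ [Instr.commit (-((c.length : ℤ) + 1))])).length := by
      simp only [nxt, List.length_cons, List.length_append, List.length_nil, List.length_singleton]; omega
    refine Relation.ReflTransGen.head (Step.choice hch) ?_
    refine Relation.ReflTransGen.trans h1 ?_
    rw [hn]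
    exact Relation.ReflTransGen.single Step.unwind_back
  | @rep2 p s s1 t1 s2 t2 _ _ ih1 ih2 =>
    intro i e hseg
    refine ⟨fun s1' t' ht => ?_, fun h => nomatch h⟩
    cases ht
    set c := compile addr p (i + 1) with hc
    have hcomp : compile addr (PExp.star p) i
        = .choice ((c.length : ℤ) + 2) :: (c ++ [.commit (-((c.length : ℤ) + 1))]) := rfl
    have hseg' := hseg
    rw [hcomp] at hseg'
    obtain ⟨hch, hrest⟩ := hseg'.cons
    have hsp := SegAt.split hrest
    have hcm := hsp.2.lookup (j := 0) (ins := .commit (-((c.length : ℤ) + 1))) rfl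
    simp only [Nat.add_zero] at hcm
    have h1 := (ih1 (i + 1) (.back (nxt i ((c.length : ℤ) + 2)) s :: e) hsp.1).1 s1 t1 rfl
    have h2 := (ih2 i e hseg).1 s2 t2 rfl
    refine Relation.ReflTransGen.head (Step.choice hch) ?_
    refine Relation.ReflTransGen.trans h1 ?_
    refine Relation.ReflTransGen.head (Step.commit hcm) ?_
    have hn : nxt (i + 1 + c.length) (-((c.length : ℤ) + 1)) = i := by simp only [nxt]; omega
    rw [hn]
    exact h2

end Aux

/-- Correctness of `Π` without left recursion: if the compiled productions of
`G` and the compiled program `Π(G, i, p)` sit inside `prog` (at the addresses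
given by `addr` and at `i`, respectively), then a successful match
`G[p] xy ⇝ (y, x')` makes the machine go from `⟨i, xy, e⟩` to
`⟨i + |Π(G, i, p)|, y, e⟩`, and a failing match `G[p] xy ⇝ fail` makes it go
from `⟨i, xy, e⟩` to `Fail⟨e⟩`. -/
theorem machine_correct {N T : Type} (G : PEG N T) (addr : N → ℕ)
    (prog : List (Instr T))
    (hgram : ∀ A : N, SegAt prog (addr A)
      (compile addr (G.prod A) (addr A) ++ [Instr.ret]))
    (p : PExp N T) (i : ℕ) (hp : SegAt prog i (compile addr p i))
    (x y : List T) (e : List (Frame T)) :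
    (∀ x' : PStr N T, Match G p (x ++ y) (Res.ok y x') →
      Steps prog (MState.st i (x ++ y) e)
        (MState.st (i + (compile addr p i).length) y e)) ∧
    (Match G p (x ++ y) Res.fail →
      Steps prog (MState.st i (x ++ y) e) (MState.fail e)) := by
  constructor
  · intro x' hm
    exact (correct_aux G addr prog hgram hm i e hp).1 y x' rfl
  · intro hm
    exact (correct_aux G addr prog hgram hm i e hp).2 rfl
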